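/- In the setting where P^τ(g) = sup_{μ ∈ M^τ(Ω)} (μ(g) + h^τ(μ)) with M^τ(Ω) nonempty compact convex and h^τ bounded affine upper semicontinuous, fix f ∈ C(Ω) and define Q(g) = P^τ(f+g) − P^τ(f) for g ∈ C(Ω). Then the Fenchel–Legendre transform Q*(μ) = sup_{g ∈ C(Ω)} (μ(g) − Q(g)), defined on the space of finite signed measures on Ω with the weak* topology, has effective domain exactly M^τ(Ω), and for every μ ∈ M^τ(Ω), Q*(μ) = P^τ(f) − h^τ(μ) − μ(f). -/

import Mathlib

open Filter Topology

noncomputable instance weakDualLCS (X : Type*) [NormedAddCommGroup X] [NormedSpace ℝ X] :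
    LocallyConvexSpace ℝ (WeakDual ℝ X) :=
  WeakBilin.locallyConvexSpace (B := topDualPairing ℝ X)

/-- Continuous linear functionals on the weak-* dual are evaluations at points of the predual. -/
lemma eval_rep {X : Type*} [NormedAddCommGroup X] [NormedSpace ℝ X]
    (φ : WeakDual ℝ X →L[ℝ] ℝ) : ∃ g : X, ∀ μ : WeakDual ℝ X, φ μ = μ g := by
  set B := topDualPairing ℝ X with hB
  have hsem := B.weakBilin_withSeminorms
  let q : Seminorm ℝ (WeakBilin B) := φ.toLinearMap.toSeminorm
  have hq : Continuous q := φ.continuous.norm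
  obtain ⟨s, Cc, hCc, hbound⟩ := Seminorm.bound_of_continuous hsem q hq
  have hker : (⨅ g : s, LinearMap.ker (B.flip (g : X))) ≤ LinearMap.ker φ.toLinearMap := by
    intro μ hμ
    simp only [Submodule.mem_iInf, LinearMap.mem_ker] at hμ ⊢
    have h0 : (s.sup B.toSeminormFamily) μ ≤ 0 := by
      apply Seminorm.finset_sup_apply_le le_rfl
      intro g hg
      have := hμ ⟨g, hg⟩
      simp only [LinearMap.flip_apply] at this
      simp [LinearMap.toSeminormFamily, LinearMap.toSeminorm_apply, this]
    have h1 : q μ ≤ 0 := by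
      have := hbound μ
      simp only [Seminorm.smul_apply, NNReal.smul_def, smul_eq_mul] at this
      calc q μ ≤ (Cc : ℝ) * (s.sup B.toSeminormFamily) μ := this
        _ ≤ (Cc : ℝ) * 0 := by
            exact mul_le_mul_of_nonneg_left h0 Cc.coe_nonneg
        _ = 0 := mul_zero _
    have : ‖φ μ‖ ≤ 0 := h1
    exact norm_le_zero_iff.1 this
  have hmem := mem_span_of_iInf_ker_le_ker (𝕜 := ℝ) hker
  have hsub : Submodule.span ℝ (Set.range fun g : s => B.flip (g : X)) ≤ LinearMap.range B.flip :=
    Submodule.span_le.2 (by rintro _ ⟨g, rfl⟩; exact ⟨g, rfl⟩)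
  obtain ⟨g, hg⟩ := hsub hmem
  exact ⟨g, fun μ => by rw [show (φ : WeakDual ℝ X → ℝ) μ = φ.toLinearMap μ from rfl, ← hg]; rfl⟩

/-- Inf-representation of an affine u.s.c. function on a compact convex set, at a point,
via Hahn–Banach separation of the hypograph. -/
lemma sep_lemma {X : Type*} [NormedAddCommGroup X] [NormedSpace ℝ X]
    (M : Set (WeakDual ℝ X)) (hcl : IsClosed M) (hconv : Convex ℝ M)
    (h : WeakDual ℝ X → ℝ)
    (haff : ∀ μ ∈ M, ∀ ν ∈ M, ∀ a b : ℝ, 0 ≤ a → 0 ≤ b → a + b = 1 →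
      h (a • μ + b • ν) = a * h μ + b * h ν)
    (husc : UpperSemicontinuousOn h M)
    {μ0 : WeakDual ℝ X} (hμ0 : μ0 ∈ M) {ε : ℝ} (hε : 0 < ε) :
    ∃ g : X, ∀ ν ∈ M, ν g + h ν ≤ μ0 g + h μ0 + ε := by
  set A : Set (WeakDual ℝ X × ℝ) := {p | p.1 ∈ M ∧ p.2 ≤ h p.1} with hA
  have hAconv : Convex ℝ A := by
    rintro ⟨ν1, t1⟩ ⟨hν1, ht1⟩ ⟨ν2, t2⟩ ⟨hν2, ht2⟩ a b ha hb hab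
    refine ⟨hconv hν1 hν2 ha hb hab, ?_⟩
    show a * t1 + b * t2 ≤ h (a • ν1 + b • ν2)
    rw [haff ν1 hν1 ν2 hν2 a b ha hb hab]
    exact add_le_add (mul_le_mul_of_nonneg_left ht1 ha) (mul_le_mul_of_nonneg_left ht2 hb)
  have hAcl : IsClosed A := by
    rw [← isOpen_compl_iff]
    rw [isOpen_iff_mem_nhds]
    rintro ⟨ν, t⟩ hmem
    simp only [Set.mem_compl_iff, hA, Set.mem_setOf_eq, not_and, not_le] at hmem
    by_cases hνM : ν ∈ M
    · have htν : h ν < t := hmem hνM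
      set y := (h ν + t) / 2 with hy
      have h1 : ∀ᶠ x in 𝓝[M] ν, h x < y := husc ν hνM y (by rw [hy]; linarith)
      rw [eventually_nhdsWithin_iff] at h1
      have h2 : {x : WeakDual ℝ X | x ∈ M → h x < y} ×ˢ Set.Ioi y ∈ 𝓝 ((ν, t) : WeakDual ℝ X × ℝ) :=
        prod_mem_nhds h1 (Ioi_mem_nhds (by rw [hy]; linarith))
      filter_upwards [h2]
      rintro ⟨x, s⟩ ⟨hx1, hx2⟩
      simp only [Set.mem_compl_iff, hA, Set.mem_setOf_eq, not_and, not_le]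
      intro hxM
      exact lt_trans (hx1 hxM) hx2
    · have h2 : Mᶜ ×ˢ (Set.univ : Set ℝ) ∈ 𝓝 ((ν, t) : WeakDual ℝ X × ℝ) :=
        prod_mem_nhds (hcl.isOpen_compl.mem_nhds hνM) Filter.univ_mem
      filter_upwards [h2]
      rintro ⟨x, s⟩ ⟨hx1, -⟩
      simp only [Set.mem_compl_iff, hA, Set.mem_setOf_eq, not_and, not_le]
      exact fun hxM => absurd hxM hx1
  have hnotmem : ((μ0, h μ0 + ε) : WeakDual ℝ X × ℝ) ∉ A := by
    simp only [hA, Set.mem_setOf_eq, not_and, not_le]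
    intro _; linarith
  obtain ⟨φ, u, hlt, hgt⟩ := geometric_hahn_banach_closed_point hAconv hAcl hnotmem
  set ψ : WeakDual ℝ X →L[ℝ] ℝ := φ.comp (ContinuousLinearMap.inl ℝ _ ℝ) with hψ
  set c : ℝ := φ (0, 1) with hc
  have hdecomp : ∀ p : WeakDual ℝ X × ℝ, φ p = ψ p.1 + p.2 * c := by
    rintro ⟨x, t⟩
    have : ((x, t) : WeakDual ℝ X × ℝ) = (x, 0) + t • ((0 : WeakDual ℝ X), (1 : ℝ)) := by
      simp [Prod.ext_iff]
    rw [this, map_add, map_smul]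
    simp [hψ, hc, smul_eq_mul]
  have hcnn : 0 ≤ c := by
    by_contra hcneg
    push_neg at hcneg
    set t : ℝ := min (h μ0) ((u - ψ μ0) / c) with ht
    have hmemA : ((μ0, t) : WeakDual ℝ X × ℝ) ∈ A := ⟨hμ0, min_le_left _ _⟩
    have h1 : φ (μ0, t) < u := hlt _ hmemA
    rw [hdecomp] at h1
    have h2 : t ≤ (u - ψ μ0) / c := min_le_right _ _
    have h3 : (u - ψ μ0) / c * c ≤ t * c := mul_le_mul_of_nonpos_right h2 hcneg.le
    rw [div_mul_cancel₀ _ (ne_of_lt hcneg)] at h3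
    simp only at h1
    linarith
  have hcpos : 0 < c := by
    rcases lt_or_eq_of_le hcnn with hpos | heq
    · exact hpos
    · exfalso
      have h1 : φ (μ0, h μ0) < u := hlt _ ⟨hμ0, le_rfl⟩
      have h2 := hgt
      rw [hdecomp] at h1 h2
      simp only [← heq, mul_zero] at h1 h2
      linarith
  obtain ⟨g0, hg0⟩ := eval_rep ψ
  refine ⟨c⁻¹ • g0, fun ν hν => ?_⟩
  have h1 : φ (ν, h ν) < u := hlt _ ⟨hν, le_rfl⟩
  have h2 := hgt
  rw [hdecomp] at h1 h2
  simp only at h1 h2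
  have h3 : ψ ν + h ν * c < ψ μ0 + (h μ0 + ε) * c := lt_trans h1 h2
  have h4 : ν (c⁻¹ • g0) = c⁻¹ * ψ ν := by rw [map_smul, smul_eq_mul, hg0]
  have h5 : μ0 (c⁻¹ • g0) = c⁻¹ * ψ μ0 := by rw [map_smul, smul_eq_mul, hg0]
  rw [h4, h5]
  have h6 : c⁻¹ * (ψ ν + h ν * c) ≤ c⁻¹ * (ψ μ0 + (h μ0 + ε) * c) :=
    mul_le_mul_of_nonneg_left h3.le (inv_nonneg.2 hcpos.le)
  have h7 : c⁻¹ * c = 1 := inv_mul_cancel₀ (ne_of_gt hcpos)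
  have hc0 : c ≠ 0 := ne_of_gt hcpos
  have e1 : c⁻¹ * (ψ ν + h ν * c) = c⁻¹ * ψ ν + h ν := by field_simp
  have e2 : c⁻¹ * (ψ μ0 + (h μ0 + ε) * c) = c⁻¹ * ψ μ0 + (h μ0 + ε) := by field_simp
  rw [e1, e2] at h6
  linarith


lemma ereal_le_of_forall_eps {v : ℝ} {x : EReal}
    (hx : ∀ ε : ℝ, 0 < ε → ((v - ε : ℝ) : EReal) ≤ x) : (v : EReal) ≤ x := by
  induction x using EReal.rec with
  | bot =>
    exfalso
    have := le_bot_iff.1 (hx 1 one_pos)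
    exact (EReal.coe_ne_bot _) this
  | coe r =>
    rw [EReal.coe_le_coe_iff]
    by_contra hvr
    push_neg at hvr
    have := EReal.coe_le_coe_iff.1 (hx ((v - r)/2) (by linarith))
    linarith
  | top => exact le_top

/-- The Fenchel–Legendre transform `Q*` of `Q(g) = P(f+g) − P(f)` has effective domain exactly
`M = M^τ(Ω)`, and `Q*(μ) = P(f) − h(μ) − μ(f)` for `μ ∈ M`. -/
theorem stmt5 {Ω : Type} [TopologicalSpace Ω] [CompactSpace Ω]
    [TopologicalSpace.MetrizableSpace Ω] [Nonempty Ω]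
    (M : Set (WeakDual ℝ C(Ω, ℝ))) (hne : M.Nonempty) (hcomp : IsCompact M)
    (hconv : Convex ℝ M)
    (hprob : ∀ μ ∈ M, μ (1 : C(Ω, ℝ)) = 1 ∧ ∀ g : C(Ω, ℝ), (∀ ω, 0 ≤ g ω) → 0 ≤ μ g)
    (h : WeakDual ℝ C(Ω, ℝ) → ℝ)
    (hbdd : ∃ C : ℝ, ∀ μ ∈ M, |h μ| ≤ C)
    (haff : ∀ μ ∈ M, ∀ ν ∈ M, ∀ a b : ℝ, 0 ≤ a → 0 ≤ b → a + b = 1 →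
      h (a • μ + b • ν) = a * h μ + b * h ν)
    (husc : UpperSemicontinuousOn h M)
    (f : C(Ω, ℝ))
    (P : C(Ω, ℝ) → ℝ)
    (hP : ∀ g : C(Ω, ℝ), P g = sSup ((fun μ : WeakDual ℝ C(Ω, ℝ) => μ g + h μ) '' M))
    (Qstar : WeakDual ℝ C(Ω, ℝ) → EReal)
    (hQ : ∀ μ : WeakDual ℝ C(Ω, ℝ),
      Qstar μ = ⨆ g : C(Ω, ℝ), (((μ g - (P (f + g) - P f) : ℝ)) : EReal)) :
    {μ : WeakDual ℝ C(Ω, ℝ) | Qstar μ ≠ ⊤} = M ∧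
      ∀ μ ∈ M, Qstar μ = (((P f - h μ - μ f : ℝ)) : EReal) := by
  obtain ⟨C, hC⟩ := hbdd
  have hMcl : IsClosed M := hcomp.isClosed
  -- basic bound: μ g ≤ ‖g‖ for μ ∈ M
  have hbnd : ∀ (g : C(Ω, ℝ)) (μ : WeakDual ℝ C(Ω, ℝ)), μ ∈ M → μ g ≤ ‖g‖ := by
    intro g μ hμ
    have h1 : ∀ ω, 0 ≤ (‖g‖ • (1 : C(Ω, ℝ)) - g) ω := by
      intro ω
      simp only [ContinuousMap.sub_apply, ContinuousMap.smul_apply, ContinuousMap.one_apply,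
        smul_eq_mul, mul_one]
      have h2 := g.norm_coe_le_norm ω
      rw [Real.norm_eq_abs] at h2
      have h3 := le_abs_self (g ω)
      linarith
    have h2 := (hprob μ hμ).2 _ h1
    rw [map_sub, map_smul, smul_eq_mul, (hprob μ hμ).1, mul_one] at h2
    linarith
  have hbddA : ∀ g : C(Ω, ℝ), BddAbove ((fun μ : WeakDual ℝ C(Ω, ℝ) => μ g + h μ) '' M) := by
    intro g
    refine ⟨‖g‖ + C, ?_⟩
    rintro _ ⟨μ, hμ, rfl⟩
    have h1 := hbnd g μ hμ
    have h2 := (abs_le.1 (hC μ hμ)).2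
    dsimp only
    linarith
  have hle : ∀ (g : C(Ω, ℝ)) (μ : WeakDual ℝ C(Ω, ℝ)), μ ∈ M → μ g + h μ ≤ P g := by
    intro g μ hμ
    rw [hP]
    exact le_csSup (hbddA g) ⟨μ, hμ, rfl⟩
  have hub : ∀ (g : C(Ω, ℝ)) (c : ℝ), (∀ μ ∈ M, μ g + h μ ≤ c) → P g ≤ c := by
    intro g c hc
    rw [hP]
    exact csSup_le (hne.image _) (by rintro _ ⟨μ, hμ, rfl⟩; exact hc μ hμ)
  -- Part 2
  have hpart2 : ∀ μ ∈ M, Qstar μ = (((P f - h μ - μ f : ℝ)) : EReal) := by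
    intro μ hμ
    rw [hQ]
    apply le_antisymm
    · refine iSup_le fun g => ?_
      rw [EReal.coe_le_coe_iff]
      have h1 := hle (f + g) μ hμ
      rw [map_add] at h1
      linarith
    · apply ereal_le_of_forall_eps
      intro ε hε
      obtain ⟨g, hg⟩ := sep_lemma M hMcl hconv h haff husc hμ hε
      have hPg : P g ≤ μ g + h μ + ε := hub g _ hg
      refine le_trans ?_ (le_iSup (fun g : C(Ω, ℝ) => (((μ g - (P (f + g) - P f) : ℝ)) : EReal)) (g - f))
      rw [EReal.coe_le_coe_iff]
      have h2 : f + (g - f) = g := by abel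
      rw [h2, map_sub]
      linarith
  refine ⟨?_, hpart2⟩
  ext μ
  simp only [Set.mem_setOf_eq]
  constructor
  · intro hne_top
    have hbot0 : (((μ 0 - (P (f + 0) - P f) : ℝ)) : EReal) ≤ Qstar μ := by
      rw [hQ]; exact le_iSup (fun g : C(Ω, ℝ) => (((μ g - (P (f + g) - P f) : ℝ)) : EReal)) 0
    have hne_bot : Qstar μ ≠ ⊥ := by
      intro hb
      rw [hb, le_bot_iff] at hbot0
      exact (EReal.coe_ne_bot _) hbot0
    have hKeq : (((Qstar μ).toReal : ℝ) : EReal) = Qstar μ := EReal.coe_toReal hne_top hne_bot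
    set K := (Qstar μ).toReal with hK
    have hbound : ∀ g : C(Ω, ℝ), μ g - (P (f + g) - P f) ≤ K := by
      intro g
      have h1 : (((μ g - (P (f + g) - P f) : ℝ)) : EReal) ≤ Qstar μ := by
        rw [hQ]; exact le_iSup (fun g : C(Ω, ℝ) => (((μ g - (P (f + g) - P f) : ℝ)) : EReal)) g
      rw [← hKeq] at h1
      exact EReal.coe_le_coe_iff.1 h1
    have hbddS : ∀ g : C(Ω, ℝ), BddAbove ((fun ν : WeakDual ℝ C(Ω, ℝ) => ν g) '' M) :=
      fun g => ⟨‖g‖, by rintro _ ⟨ν, hν, rfl⟩; exact hbnd g ν hν⟩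
    have hdom : ∀ g : C(Ω, ℝ), μ g ≤ sSup ((fun ν : WeakDual ℝ C(Ω, ℝ) => ν g) '' M) := by
      intro g
      by_contra hlt
      push_neg at hlt
      set S := sSup ((fun ν : WeakDual ℝ C(Ω, ℝ) => ν g) '' M) with hS
      have hkey : ∀ t : ℝ, 0 < t → t * (μ g - S) ≤ ‖f‖ + C - P f + K := by
        intro t ht
        have h1 : μ (t • g) - (P (f + t • g) - P f) ≤ K := hbound _
        have h2 : P (f + t • g) ≤ ‖f‖ + t * S + C := by
          apply hub
          intro ν hν
          have h3 : ν g ≤ S := le_csSup (hbddS g) ⟨ν, hν, rfl⟩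
          have h4 : ν f ≤ ‖f‖ := hbnd f ν hν
          have h5 := (abs_le.1 (hC ν hν)).2
          rw [map_add, map_smul, smul_eq_mul]
          have h6 : t * ν g ≤ t * S := mul_le_mul_of_nonneg_left h3 ht.le
          linarith
        rw [map_smul, smul_eq_mul] at h1
        have h7 : t * (μ g - S) = t * μ g - t * S := by ring
        linarith
      have hpos : 0 < μ g - S := sub_pos.2 hlt
      set D : ℝ := ‖f‖ + C - P f + K with hD
      have h8 := hkey ((|D| + 1) / (μ g - S)) (by positivity)
      rw [div_mul_cancel₀ _ (ne_of_gt hpos)] at h8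
      have h9 := le_abs_self D
      linarith
    by_contra hμM
    obtain ⟨φ, u, hlt2, hgt2⟩ := geometric_hahn_banach_closed_point hconv hMcl hμM
    obtain ⟨g, hg⟩ := eval_rep φ
    have h1 : sSup ((fun ν : WeakDual ℝ C(Ω, ℝ) => ν g) '' M) ≤ u :=
      csSup_le (hne.image _) (by rintro _ ⟨ν, hν, rfl⟩; show ν g ≤ u; rw [← hg ν]; exact (hlt2 ν hν).le)
    have h2 := hdom g
    have h3 := hg μ
    linarith [hgt2]
  · intro hμ
    rw [hpart2 μ hμ]
    exact EReal.coe_ne_top _
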